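/- arXiv:1912.04323 — 2 statements merged into one kernel-verified Lean document; each statement's English description precedes it below -/
import Mathlib

section
/- Let v : [0,T]×D → ℝ^m be Lipschitz continuous, let f ∈ C¹(ℝ^m;ℝ^m), let η ∈ C¹(ℝ^m;ℝ) and q ∈ C¹(ℝ^m;ℝ) satisfy Dq = Dη·Df, and set R := ∂_t v + ∂_x f(v) (defined a.e.). Then for every φ ∈ C^∞([0,T);ℝ) with compact support in [0,T): ∫_0^T ∫_D η(v(t,x)) φ'(t) dx dt + ∫_0^T ∫_D ( Dη(v(t,x)) · R(t,x) ) φ(t) dx dt + ∫_D η(v(0,x)) φ(0) dx = 0. -/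
open MeasureTheory Set
open scoped ENNReal

section Aux

open Filter Function
open scoped NNReal Topology

/-- Fundamental theorem of calculus for Lipschitz functions with an a.e. derivative. -/
lemma ftc_lip {a b : ℝ} (hab : a ≤ b) {f g : ℝ → ℝ} {K : NNReal}
    (hf : LipschitzWith K f)
    (hg : ∀ᵐ t ∂(volume.restrict (Ioo a b)), HasDerivAt f (g t) t) :
    ∫ t in Ioo a b, g t = f b - f a := by
  have hfc : Continuous f := hf.continuous
  set μ := volume.restrict (Ioo a b) with hμ
  haveI : IsFiniteMeasure μ := by
    constructor
    rw [hμ, Measure.restrict_apply_univ, Real.volume_Ioo]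
    exact ENNReal.ofReal_lt_top
  set u : ℕ → ℝ := fun n => 1 / (n + 1) with hu
  have hupos : ∀ n, 0 < u n := fun n => by positivity
  have hu0 : Tendsto u atTop (𝓝 0) := tendsto_one_div_add_atTop_nhds_zero_nat
  have hseq : ∀ t : ℝ, Tendsto (fun n => t + u n) atTop (𝓝[≠] t) := by
    intro t
    apply tendsto_nhdsWithin_of_tendsto_nhds_of_eventually_within
    · simpa using (tendsto_const_nhds.add hu0)
    · filter_upwards with n
      simp only [mem_compl_iff, mem_singleton_iff]
      intro h
      have : u n = 0 := by linarith
      exact (hupos n).ne' this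
  set F : ℕ → ℝ → ℝ := fun n t => (f (t + u n) - f t) / u n with hF
  have hkey : ∀ (h : ℝ → ℝ) (t L : ℝ), HasDerivAt h L t →
      Tendsto (fun n => (h (t + u n) - h t) / u n) atTop (𝓝 L) := by
    intro h t L ht
    have hslope := hasDerivAt_iff_tendsto_slope.1 ht
    have := hslope.comp (hseq t)
    apply Tendsto.congr _ this
    intro n
    simp only [Function.comp_apply, slope_def_field]
    rw [add_sub_cancel_left]
  have hconv : ∀ᵐ t ∂μ, Tendsto (fun n => F n t) atTop (𝓝 (g t)) := by
    filter_upwards [hg] with t ht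
    exact hkey f t (g t) ht
  have hFm : ∀ n, AEStronglyMeasurable (F n) μ :=
    fun n => (((hfc.comp (continuous_id.add continuous_const)).sub hfc).div_const
      _).aestronglyMeasurable
  have hFb : ∀ n, ∀ᵐ t ∂μ, ‖F n t‖ ≤ (K : ℝ) := by
    intro n
    filter_upwards with t
    have h1 : |f (t + u n) - f t| ≤ (K : ℝ) * |(t + u n) - t| := by
      have := hf.dist_le_mul (t + u n) t
      simpa [Real.dist_eq] using this
    have h2 : |(t + u n) - t| = u n := by
      rw [add_sub_cancel_left, abs_of_pos (hupos n)]
    rw [h2] at h1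
    simp only [hF, Real.norm_eq_abs, abs_div, abs_of_pos (hupos n)]
    rw [div_le_iff₀ (hupos n)]
    linarith [h1]
  have hDCT : Tendsto (fun n => ∫ t, F n t ∂μ) atTop (𝓝 (∫ t, g t ∂μ)) :=
    tendsto_integral_of_dominated_convergence _ hFm (integrable_const _) hFb hconv
  set G : ℝ → ℝ := fun s => ∫ x in a..s, f x with hG
  have hGd : ∀ s, HasDerivAt G (f s) s := fun s =>
    intervalIntegral.integral_hasDerivAt_right (hfc.intervalIntegrable _ _)
      (hfc.stronglyMeasurableAtFilter _ _) hfc.continuousAt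
  have hFeq : ∀ n, ∫ t, F n t ∂μ = ((G (b + u n) - G b) - (G (a + u n) - G a)) / u n := by
    intro n
    have hi1 : IntegrableOn (fun t => f (t + u n)) (Ioo a b) :=
      ((hfc.comp (continuous_id.add continuous_const)).integrableOn_Icc).mono_set
        Ioo_subset_Icc_self
    have hi2 : IntegrableOn f (Ioo a b) := (hfc.integrableOn_Icc).mono_set Ioo_subset_Icc_self
    have h1 : ∫ t, F n t ∂μ
        = ((∫ t in Ioo a b, f (t + u n)) - (∫ t in Ioo a b, f t)) / u n := by
      rw [← integral_sub hi1 hi2, ← integral_div]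
    have e1 : (∫ t in Ioo a b, f (t + u n)) = ∫ x in (a + u n)..(b + u n), f x := by
      rw [← integral_Ioc_eq_integral_Ioo, ← intervalIntegral.integral_of_le hab,
        intervalIntegral.integral_comp_add_right]
    have e2 : (∫ t in Ioo a b, f t) = ∫ x in a..b, f x := by
      rw [← integral_Ioc_eq_integral_Ioo, ← intervalIntegral.integral_of_le hab]
    have i1 : ∫ x in a..(a + u n), f x = G (a + u n) - G a := by
      simp only [hG, intervalIntegral.integral_same]
      abel_nf
    have i4 : (∫ x in a..(a+u n), f x) + ∫ x in (a+u n)..(b+u n), f x = G (b + u n) :=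
      intervalIntegral.integral_add_adjacent_intervals
        (hfc.intervalIntegrable _ _) (hfc.intervalIntegrable _ _)
    have e3 : (∫ x in (a + u n)..(b + u n), f x) - ∫ x in a..b, f x
        = (G (b + u n) - G b) - (G (a + u n) - G a) := by
      have h5 : ∫ x in (a+u n)..(b+u n), f x = G (b + u n) - (G (a + u n) - G a) := by
        rw [← i4, i1]; ring
      rw [h5]
      have hGb : (∫ x in a..b, f x) = G b := rfl
      rw [hGb]; ring
    rw [h1, e1, e2, e3]
  have h2 : Tendsto (fun n => ∫ t, F n t ∂μ) atTop (𝓝 (f b - f a)) := by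
    have hb := hkey G b (f b) (hGd b)
    have ha := hkey G a (f a) (hGd a)
    have hsub := hb.sub ha
    apply Tendsto.congr _ hsub
    intro n
    rw [hFeq n]
    ring
  exact tendsto_nhds_unique hDCT h2

/-- A product of bounded Lipschitz functions is Lipschitz. -/
lemma lip_mul {f g : ℝ → ℝ} {Kf Kg : NNReal} {Cf Cg : ℝ}
    (hf : LipschitzWith Kf f) (hg : LipschitzWith Kg g)
    (hCf : ∀ x, |f x| ≤ Cf) (hCg : ∀ x, |g x| ≤ Cg) :
    ∃ K : NNReal, LipschitzWith K (fun x => f x * g x) := by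
  refine ⟨Kf * Real.toNNReal Cg + Kg * Real.toNNReal Cf,
    LipschitzWith.of_dist_le_mul fun x y => ?_⟩
  have h1 : |f x * g x - f y * g y| ≤ |f x| * |g x - g y| + |g y| * |f x - f y| := by
    calc |f x * g x - f y * g y| = |f x * (g x - g y) + g y * (f x - f y)| := by ring_nf
    _ ≤ |f x * (g x - g y)| + |g y * (f x - f y)| := abs_add_le _ _
    _ = |f x| * |g x - g y| + |g y| * |f x - f y| := by rw [abs_mul, abs_mul]
  have hfd : |f x - f y| ≤ (Kf : ℝ) * |x - y| := by
    have := hf.dist_le_mul x y; simpa [Real.dist_eq] using this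
  have hgd : |g x - g y| ≤ (Kg : ℝ) * |x - y| := by
    have := hg.dist_le_mul x y; simpa [Real.dist_eq] using this
  have hCf' : |f x| ≤ max Cf 0 := le_trans (hCf x) (le_max_left _ _)
  have hCg' : |g y| ≤ max Cg 0 := le_trans (hCg y) (le_max_left _ _)
  have hcoe : ((Kf * Real.toNNReal Cg + Kg * Real.toNNReal Cf : NNReal) : ℝ)
      = (Kf : ℝ) * max Cg 0 + (Kg : ℝ) * max Cf 0 := by
    push_cast [Real.coe_toNNReal']
    ring
  simp only [Real.dist_eq]
  rw [hcoe]
  have h2 : |f x| * |g x - g y| ≤ max Cf 0 * ((Kg : ℝ) * |x - y|) :=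
    mul_le_mul hCf' hgd (abs_nonneg _) (le_max_right _ _)
  have h3 : |g y| * |f x - f y| ≤ max Cg 0 * ((Kf : ℝ) * |x - y|) :=
    mul_le_mul hCg' hfd (abs_nonneg _) (le_max_right _ _)
  have h4 : max Cf 0 * ((Kg : ℝ) * |x - y|) + max Cg 0 * ((Kf : ℝ) * |x - y|)
      = ((Kf : ℝ) * max Cg 0 + (Kg : ℝ) * max Cf 0) * |x - y| := by ring
  linarith

end Aux

/-- Let `D` be the interval `(0,1)` with periodic boundary conditions, let
`v : [0,T]×D → ℝ^m` be Lipschitz (encoded as a function on `ℝ×ℝ`, `1`-periodic in space,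
Lipschitz on `[0,T]×ℝ`), let `f ∈ C¹(ℝ^m;ℝ^m)`, let `(η,q)` be a `C¹` entropy/entropy-flux
pair (`Dq = Dη·Df`) and let `R = ∂_t v + ∂_x f(v)` be the a.e.-defined residual.  Then for
every `φ ∈ C^∞([0,T);ℝ)` with compact support in `[0,T)`:

`∫_0^T ∫_D η(v) φ'(t) dx dt + ∫_0^T ∫_D (Dη(v)·R) φ(t) dx dt + ∫_D η(v(0,x)) φ(0) dx = 0`. -/
theorem stmt13 {m : ℕ} {T : ℝ} (hT : 0 < T) (Lv : NNReal)
    (v : ℝ → ℝ → EuclideanSpace ℝ (Fin m))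
    (hv_lip : LipschitzOnWith Lv (fun p : ℝ × ℝ => v p.1 p.2) (Icc 0 T ×ˢ univ))
    (hv_per : ∀ t x, v t (x + 1) = v t x)
    (f : EuclideanSpace ℝ (Fin m) → EuclideanSpace ℝ (Fin m)) (hf : ContDiff ℝ 1 f)
    (η q : EuclideanSpace ℝ (Fin m) → ℝ) (hη : ContDiff ℝ 1 η) (hq : ContDiff ℝ 1 q)
    (hcompat : ∀ w, fderiv ℝ q w = (fderiv ℝ η w).comp (fderiv ℝ f w))
    (R : ℝ → ℝ → EuclideanSpace ℝ (Fin m))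
    (hR : ∀ᵐ p ∂((volume.restrict (Ioo 0 T)).prod (volume.restrict (Ioo (0:ℝ) 1))),
      ∃ a b : EuclideanSpace ℝ (Fin m),
        HasDerivAt (fun s => v s p.2) a p.1 ∧
        HasDerivAt (fun y => f (v p.1 y)) b p.2 ∧
        R p.1 p.2 = a + b) :
    ∀ φ : ℝ → ℝ,
      ContDiff ℝ (⊤:ℕ∞) φ →
      (∃ t₀ < T, ∀ t, t₀ ≤ t → φ t = 0) →
      (∫ t in Ioo 0 T, ∫ x in Ioo (0:ℝ) 1, η (v t x) * deriv φ t)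
        + (∫ t in Ioo 0 T, ∫ x in Ioo (0:ℝ) 1, fderiv ℝ η (v t x) (R t x) * φ t)
        + (∫ x in Ioo (0:ℝ) 1, η (v 0 x) * φ 0) = 0 := by
  intro φ hφ hsupp
  obtain ⟨t₀, ht₀T, hφ0⟩ := hsupp
  have hφT : φ T = 0 := hφ0 T (le_of_lt ht₀T)
  have hφd : Differentiable ℝ φ := hφ.differentiable (by simp)
  have hφdc : Continuous (deriv φ) := hφ.continuous_deriv (by exact_mod_cast le_top)
  -- the clamp map onto [0,T]
  set cl : ℝ → ℝ := fun s => max 0 (min s T) with hcl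
  have hclmem : ∀ s, cl s ∈ Icc 0 T :=
    fun s => ⟨le_max_left _ _, max_le (le_of_lt hT) (min_le_right _ _)⟩
  have hclid : ∀ s, s ∈ Icc 0 T → cl s = s := by
    intro s hs
    rw [hcl]
    simp only []
    rw [min_eq_left hs.2, max_eq_right hs.1]
  have hclLip : LipschitzWith 1 cl := by
    apply LipschitzWith.of_dist_le_mul
    intro x y
    simp only [Real.dist_eq, NNReal.coe_one, one_mul, hcl]
    calc |max 0 (min x T) - max 0 (min y T)|
        = |max (min x T) 0 - max (min y T) 0| := by rw [max_comm, max_comm 0]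
    _ ≤ |min x T - min y T| := abs_max_sub_max_le_abs _ _ _
    _ ≤ max |x - y| |T - T| := abs_min_sub_min_le_max _ _ _ _
    _ = |x - y| := by simp
  -- the globally Lipschitz modification of v
  set V : ℝ × ℝ → EuclideanSpace ℝ (Fin m) := fun p => v (cl p.1) p.2 with hVdef
  have hVv : ∀ t x, t ∈ Icc 0 T → V (t, x) = v t x := by
    intro t x ht
    rw [hVdef]
    simp only []
    rw [hclid t ht]
  have hclpair : LipschitzWith 1 (fun p : ℝ × ℝ => ((cl p.1, p.2) : ℝ × ℝ)) := by
    have h1 : LipschitzWith (1 * 1) (fun p : ℝ × ℝ => cl p.1) :=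
      hclLip.comp LipschitzWith.prod_fst
    have h2 := h1.prodMk LipschitzWith.prod_snd
    simpa using h2
  have hVLip : LipschitzWith (Lv * 1) V := by
    have h := hv_lip.comp (lipschitzOnWith_univ.2 hclpair)
      (fun p _ => mem_prod.2 ⟨hclmem p.1, mem_univ _⟩)
    exact lipschitzOnWith_univ.1 h
  have hVper : ∀ t x, V (t, x + 1) = V (t, x) := fun t x => hv_per _ x
  -- uniform bound for V
  obtain ⟨C, hC⟩ := (isCompact_Icc.prod (isCompact_Icc (a := (0:ℝ)) (b := 1)))
    |>.exists_bound_of_continuousOn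
      (hv_lip.continuousOn.mono (prod_mono_right (subset_univ _)))
  have hVbound : ∀ p, ‖V p‖ ≤ C := by
    intro p
    have hper : Function.Periodic (v (cl p.1)) 1 := fun y => hv_per _ y
    have h1 : V p = v (cl p.1) (p.2 - (⌊p.2⌋ : ℝ) * 1) := (hper.sub_int_mul_eq ⌊p.2⌋).symm
    rw [h1]
    have h2 := hC (cl p.1, p.2 - (⌊p.2⌋ : ℝ) * 1) (mem_prod.2 ⟨hclmem p.1,
      ⟨by show (0:ℝ) ≤ p.2 - (⌊p.2⌋ : ℝ) * 1; rw [mul_one]; linarith [Int.floor_le p.2],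
       by show p.2 - (⌊p.2⌋ : ℝ) * 1 ≤ 1; rw [mul_one]; linarith [Int.lt_floor_add_one p.2]⟩⟩)
    simpa using h2
  have hballmem : ∀ p, V p ∈ Metric.closedBall (0 : EuclideanSpace ℝ (Fin m)) C := by
    intro p
    simpa [Metric.mem_closedBall, dist_zero_right] using hVbound p
  -- Lipschitz estimates for η and q on the ball
  have hlipball : ∀ (ψ : EuclideanSpace ℝ (Fin m) → ℝ), ContDiff ℝ 1 ψ →
      ∃ K : NNReal, LipschitzOnWith K ψ (Metric.closedBall 0 C) := by
    intro ψ hψ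
    obtain ⟨M, hM⟩ := (isCompact_closedBall (0 : EuclideanSpace ℝ (Fin m)) C)
      |>.exists_bound_of_continuousOn ((hψ.continuous_fderiv one_ne_zero).continuousOn)
    refine ⟨Real.toNNReal M, Convex.lipschitzOnWith_of_nnnorm_fderiv_le
      (fun x _ => (hψ.differentiable one_ne_zero).differentiableAt) (fun x hx => ?_)
      (convex_closedBall _ _)⟩
    rw [← NNReal.coe_le_coe]
    simp only [coe_nnnorm, Real.coe_toNNReal']
    exact le_trans (hM x hx) (le_max_left _ _)
  obtain ⟨Kη, hηlip⟩ := hlipball η hη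
  obtain ⟨Kq, hqlip⟩ := hlipball q hq
  have hηV : LipschitzWith (Kη * (Lv * 1)) (η ∘ V) :=
    lipschitzOnWith_univ.1 (hηlip.comp (lipschitzOnWith_univ.2 hVLip) fun p _ => hballmem p)
  have hqV : LipschitzWith (Kq * (Lv * 1)) (q ∘ V) :=
    lipschitzOnWith_univ.1 (hqlip.comp (lipschitzOnWith_univ.2 hVLip) fun p _ => hballmem p)
  obtain ⟨Cη, hCη⟩ := (isCompact_closedBall (0 : EuclideanSpace ℝ (Fin m)) C)
    |>.exists_bound_of_continuousOn hη.continuous.continuousOn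
  have hηVb : ∀ p, |η (V p)| ≤ Cη := by
    intro p
    have := hCη _ (hballmem p)
    simpa [Real.norm_eq_abs] using this
  -- the partial derivative functions
  set A : ℝ × ℝ → ℝ := fun p => fderiv ℝ (η ∘ V) p ((1:ℝ), (0:ℝ)) with hAdef
  set B : ℝ × ℝ → ℝ := fun p => fderiv ℝ (q ∘ V) p ((0:ℝ), (1:ℝ)) with hBdef
  have hAmeas : Measurable A := by
    rw [hAdef]
    exact measurable_fderiv_apply_const ℝ _ _
  have hBmeas : Measurable B := by
    rw [hBdef]
    exact measurable_fderiv_apply_const ℝ _ _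
  have hbd_gen : ∀ (w : ℝ × ℝ → ℝ) (Kw : NNReal), LipschitzWith Kw w →
      ∀ (d : ℝ × ℝ), ‖d‖ ≤ 1 → ∀ p, |fderiv ℝ w p d| ≤ (Kw : ℝ) := by
    intro w Kw hw d hd p
    rw [← Real.norm_eq_abs]
    calc ‖fderiv ℝ w p d‖ ≤ ‖fderiv ℝ w p‖ * ‖d‖ := (fderiv ℝ w p).le_opNorm d
    _ ≤ (Kw : ℝ) * 1 := by
        apply mul_le_mul (norm_fderiv_le_of_lipschitz ℝ hw) hd (norm_nonneg _)
        exact NNReal.coe_nonneg _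
    _ = (Kw : ℝ) := mul_one _
  have hnorm10 : ‖(((1:ℝ), (0:ℝ)) : ℝ × ℝ)‖ ≤ 1 := by
    rw [Prod.norm_def]
    simp
  have hnorm01 : ‖(((0:ℝ), (1:ℝ)) : ℝ × ℝ)‖ ≤ 1 := by
    rw [Prod.norm_def]
    simp
  have hAbd : ∀ p, |A p| ≤ ((Kη * (Lv * 1) : NNReal) : ℝ) :=
    fun p => hbd_gen _ _ hηV _ hnorm10 p
  have hBbd : ∀ p, |B p| ≤ ((Kq * (Lv * 1) : NNReal) : ℝ) :=
    fun p => hbd_gen _ _ hqV _ hnorm01 p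
  -- the measures
  set μT := volume.restrict (Ioo (0:ℝ) T) with hμT
  set μX := volume.restrict (Ioo (0:ℝ) 1) with hμX
  haveI hfinT : IsFiniteMeasure μT := by
    constructor
    rw [hμT, Measure.restrict_apply_univ, Real.volume_Ioo]
    exact ENNReal.ofReal_lt_top
  haveI hfinX : IsFiniteMeasure μX := by
    constructor
    rw [hμX, Measure.restrict_apply_univ, Real.volume_Ioo]
    exact ENNReal.ofReal_lt_top
  set Pm := μT.prod μX with hPm
  have hProdRestrict : Pm = (volume : Measure (ℝ × ℝ)).restrict (Ioo 0 T ×ˢ Ioo (0:ℝ) 1) := by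
    rw [hPm, hμT, hμX, Measure.prod_restrict, ← Measure.volume_eq_prod]
  -- Rademacher a.e. differentiability facts
  have hRadV : ∀ᵐ p ∂(volume : Measure (ℝ × ℝ)), DifferentiableAt ℝ V p :=
    hVLip.ae_differentiableAt
  have hDae : ∀ᵐ p ∂Pm, DifferentiableAt ℝ V p := by
    rw [hProdRestrict]
    exact ae_restrict_of_ae hRadV
  have hmem : ∀ᵐ p ∂Pm, p.1 ∈ Ioo 0 T ∧ p.2 ∈ Ioo (0:ℝ) 1 := by
    rw [hProdRestrict]
    filter_upwards [ae_restrict_mem (measurableSet_Ioo.prod measurableSet_Ioo)] with p hp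
    exact ⟨hp.1, hp.2⟩
  have hF1 : ∀ᵐ t ∂μT, ∀ᵐ x ∂μX, DifferentiableAt ℝ V (t, x) := Measure.ae_ae_of_ae_prod hDae
  have hF2 : ∀ᵐ x ∂μX, ∀ᵐ t ∂μT, DifferentiableAt ℝ V (t, x) := by
    have hsw : LipschitzWith 1 (fun p : ℝ × ℝ => ((p.2, p.1) : ℝ × ℝ)) := by
      have := LipschitzWith.prod_snd.prodMk (LipschitzWith.prod_fst (α := ℝ) (β := ℝ))
      simpa using this
    have hWLip : LipschitzWith ((Lv * 1) * 1) (fun p : ℝ × ℝ => V (p.2, p.1)) :=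
      hVLip.comp hsw
    have hRadW : ∀ᵐ p ∂(volume : Measure (ℝ × ℝ)),
        DifferentiableAt ℝ (fun p : ℝ × ℝ => V (p.2, p.1)) p := hWLip.ae_differentiableAt
    have h1 : ∀ᵐ p ∂(μX.prod μT), DifferentiableAt ℝ (fun p : ℝ × ℝ => V (p.2, p.1)) p := by
      rw [hμX, hμT, Measure.prod_restrict, ← Measure.volume_eq_prod]
      exact ae_restrict_of_ae hRadW
    have h2 := Measure.ae_ae_of_ae_prod h1
    filter_upwards [h2] with x hx
    filter_upwards [hx] with t ht
    have hswd : DifferentiableAt ℝ (fun p : ℝ × ℝ => ((p.2, p.1) : ℝ × ℝ)) (t, x) :=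
      (differentiable_snd.prodMk differentiable_fst).differentiableAt
    have h3 := DifferentiableAt.comp (𝕜 := ℝ) (t, x) ht hswd
    exact h3
  -- pointwise derivative identifications
  have hP : ∀ t x, t ∈ Ioo 0 T → DifferentiableAt ℝ V (t, x) →
      HasDerivAt (fun s => η (v s x)) (A (t, x)) t ∧
      HasDerivAt (fun y => q (v t y)) (B (t, x)) x ∧
      HasDerivAt (fun s => v s x) (fderiv ℝ V (t, x) ((1:ℝ), (0:ℝ))) t ∧
      HasDerivAt (fun y => v t y) (fderiv ℝ V (t, x) ((0:ℝ), (1:ℝ))) x := by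
    intro t x ht hd
    have htmem : t ∈ Icc 0 T := Ioo_subset_Icc_self ht
    have hslice1 : HasDerivAt (fun s : ℝ => ((s, x) : ℝ × ℝ)) ((1:ℝ), (0:ℝ)) t :=
      (hasDerivAt_id t).prodMk (hasDerivAt_const t x)
    have hVt : HasDerivAt (fun s => V (s, x)) (fderiv ℝ V (t, x) ((1:ℝ), (0:ℝ))) t :=
      by have := hd.hasFDerivAt.comp_hasDerivAt t hslice1; exact this
    have hev : (fun s => v s x) =ᶠ[nhds t] fun s => V (s, x) := by
      filter_upwards [isOpen_Ioo.mem_nhds ht] with s hs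
      exact (hVv s x (Ioo_subset_Icc_self hs)).symm
    have hvt : HasDerivAt (fun s => v s x) (fderiv ℝ V (t, x) ((1:ℝ), (0:ℝ))) t :=
      hVt.congr_of_eventuallyEq hev
    have hslice2 : HasDerivAt (fun y : ℝ => ((t, y) : ℝ × ℝ)) ((0:ℝ), (1:ℝ)) x :=
      (hasDerivAt_const x t).prodMk (hasDerivAt_id x)
    have hVx : HasDerivAt (fun y => V (t, y)) (fderiv ℝ V (t, x) ((0:ℝ), (1:ℝ))) x :=
      hd.hasFDerivAt.comp_hasDerivAt x hslice2
    have hfunx : (fun y => V (t, y)) = fun y => v t y := funext fun y => hVv t y htmem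
    have hvx : HasDerivAt (fun y => v t y) (fderiv ℝ V (t, x) ((0:ℝ), (1:ℝ))) x :=
      hfunx ▸ hVx
    have hηd : DifferentiableAt ℝ η (V (t, x)) := (hη.differentiable one_ne_zero).differentiableAt
    have hqd : DifferentiableAt ℝ q (V (t, x)) := (hq.differentiable one_ne_zero).differentiableAt
    have hηVt : HasDerivAt (fun s => η (V (s, x)))
        (fderiv ℝ η (V (t, x)) (fderiv ℝ V (t, x) ((1:ℝ), (0:ℝ)))) t :=
      hηd.hasFDerivAt.comp_hasDerivAt t hVt
    have hAeq : A (t, x) = fderiv ℝ η (V (t, x)) (fderiv ℝ V (t, x) ((1:ℝ), (0:ℝ))) := by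
      rw [hAdef]
      simp only []
      rw [fderiv_comp (t, x) hηd hd]
      rfl
    have h1 : HasDerivAt (fun s => η (v s x)) (A (t, x)) t := by
      rw [hAeq]
      refine hηVt.congr_of_eventuallyEq ?_
      filter_upwards [hev] with s hs
      rw [hs]
    have hqVx : HasDerivAt (fun y => q (V (t, y)))
        (fderiv ℝ q (V (t, x)) (fderiv ℝ V (t, x) ((0:ℝ), (1:ℝ)))) x :=
      hqd.hasFDerivAt.comp_hasDerivAt x hVx
    have hBeq : B (t, x) = fderiv ℝ q (V (t, x)) (fderiv ℝ V (t, x) ((0:ℝ), (1:ℝ))) := by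
      rw [hBdef]
      simp only []
      rw [fderiv_comp (t, x) hqd hd]
      rfl
    have h2 : HasDerivAt (fun y => q (v t y)) (B (t, x)) x := by
      rw [hBeq]
      refine hqVx.congr_of_eventuallyEq ?_
      filter_upwards with y
      rw [hVv t y htmem]
    exact ⟨h1, h2, hvt, hvx⟩
  -- the key pointwise identity for the residual term
  have hP2 : ∀ t x, t ∈ Ioo 0 T → DifferentiableAt ℝ V (t, x) →
      (∃ a b : EuclideanSpace ℝ (Fin m),
        HasDerivAt (fun s => v s x) a t ∧ HasDerivAt (fun y => f (v t y)) b x ∧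
        R t x = a + b) →
      fderiv ℝ η (v t x) (R t x) = A (t, x) + B (t, x) := by
    intro t x ht hd hab
    obtain ⟨a, b, ha, hb, hRab⟩ := hab
    obtain ⟨h1, h2, hvt, hvx⟩ := hP t x ht hd
    have hηd : DifferentiableAt ℝ η (v t x) := (hη.differentiable one_ne_zero).differentiableAt
    have hfd : DifferentiableAt ℝ f (v t x) := (hf.differentiable one_ne_zero).differentiableAt
    have hqd : DifferentiableAt ℝ q (v t x) := (hq.differentiable one_ne_zero).differentiableAt
    -- A (t,x) = Dη a
    have hηa : HasDerivAt (fun s => η (v s x)) (fderiv ℝ η (v t x) a) t :=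
      hηd.hasFDerivAt.comp_hasDerivAt t ha
    have hAa : A (t, x) = fderiv ℝ η (v t x) a := h1.unique hηa
    -- B (t,x) = Dη b
    have hc := hvx
    have hfvx : HasDerivAt (fun y => f (v t y))
        (fderiv ℝ f (v t x) (fderiv ℝ V (t, x) ((0:ℝ), (1:ℝ)))) x :=
      hfd.hasFDerivAt.comp_hasDerivAt x hvx
    have hbu : b = fderiv ℝ f (v t x) (fderiv ℝ V (t, x) ((0:ℝ), (1:ℝ))) := hb.unique hfvx
    have hqc : HasDerivAt (fun y => q (v t y))
        (fderiv ℝ q (v t x) (fderiv ℝ V (t, x) ((0:ℝ), (1:ℝ)))) x :=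
      hqd.hasFDerivAt.comp_hasDerivAt x hvx
    have hBc : B (t, x) = fderiv ℝ q (v t x) (fderiv ℝ V (t, x) ((0:ℝ), (1:ℝ))) :=
      h2.unique hqc
    have hBb : B (t, x) = fderiv ℝ η (v t x) b := by
      rw [hBc, hcompat (v t x), hbu]
      rfl
    rw [hRab, map_add, hAa, hBb]
    -- a.e. identity for the residual integrand
  have hE : ∀ᵐ p ∂Pm, fderiv ℝ η (v p.1 p.2) (R p.1 p.2) * φ p.1 = (A p + B p) * φ p.1 := by
    filter_upwards [hDae, hR, hmem] with p hd hRp hpm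
    have h := hP2 p.1 p.2 hpm.1 hd hRp
    rw [h]
  haveI : IsFiniteMeasure Pm := by rw [hPm]; infer_instance
  obtain ⟨Cφ, hCφ⟩ := (isCompact_Icc (a := (0:ℝ)) (b := T)).exists_bound_of_continuousOn
    hφ.continuous.continuousOn
  obtain ⟨Cφ', hCφ'⟩ := (isCompact_Icc (a := (0:ℝ)) (b := T)).exists_bound_of_continuousOn
    hφdc.continuousOn
  have hIntOf : ∀ h : ℝ × ℝ → ℝ, AEStronglyMeasurable h Pm →
      (∃ C0 : ℝ, ∀ᵐ p ∂Pm, |h p| ≤ C0) → Integrable h Pm := by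
    rintro h hm ⟨C0, hC0⟩
    refine (integrable_const C0).mono' hm ?_
    filter_upwards [hC0] with p hp
    simpa [Real.norm_eq_abs] using hp
  have hφb : ∀ᵐ p ∂Pm, |φ p.1| ≤ Cφ := by
    filter_upwards [hmem] with p hp
    simpa [Real.norm_eq_abs] using hCφ p.1 (Ioo_subset_Icc_self hp.1)
  have hφ'b : ∀ᵐ p ∂Pm, |deriv φ p.1| ≤ Cφ' := by
    filter_upwards [hmem] with p hp
    simpa [Real.norm_eq_abs] using hCφ' p.1 (Ioo_subset_Icc_self hp.1)
  have habs_mul : ∀ (a b c d : ℝ), |a| ≤ c → |b| ≤ d → |a * b| ≤ c * d := by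
    intro a b c d h1 h2
    rw [abs_mul]
    exact mul_le_mul h1 h2 (abs_nonneg _) (le_trans (abs_nonneg _) h1)
  have hInt_e1 : Integrable (fun p => η (V p) * deriv φ p.1) Pm := by
    apply hIntOf _ (((hηV.continuous).mul (hφdc.comp continuous_fst)).aestronglyMeasurable)
    exact ⟨Cη * Cφ', by filter_upwards [hφ'b] with p hp; exact habs_mul _ _ _ _ (hηVb p) hp⟩
  have hφmeas : Continuous (fun p : ℝ × ℝ => φ p.1) := hφ.continuous.comp continuous_fst
  have hInt_A : Integrable (fun p => A p * φ p.1) Pm := by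
    apply hIntOf _ ((hAmeas.aestronglyMeasurable).mul hφmeas.aestronglyMeasurable)
    exact ⟨((Kη * (Lv * 1) : NNReal) : ℝ) * Cφ,
      by filter_upwards [hφb] with p hp; exact habs_mul _ _ _ _ (hAbd p) hp⟩
  have hInt_B : Integrable (fun p => B p * φ p.1) Pm := by
    apply hIntOf _ ((hBmeas.aestronglyMeasurable).mul hφmeas.aestronglyMeasurable)
    exact ⟨((Kq * (Lv * 1) : NNReal) : ℝ) * Cφ,
      by filter_upwards [hφb] with p hp; exact habs_mul _ _ _ _ (hBbd p) hp⟩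
  have hInt_AB : Integrable (fun p => (A p + B p) * φ p.1) Pm := by
    apply (hInt_A.add hInt_B).congr
    filter_upwards with p
    show A p * φ p.1 + B p * φ p.1 = (A p + B p) * φ p.1
    ring
  have hInt_Ae1 : Integrable (fun p => A p * φ p.1 + η (V p) * deriv φ p.1) Pm :=
    hInt_A.add hInt_e1
  -- rewrite the first integral
  have hI1 : (∫ t, ∫ x, η (v t x) * deriv φ t ∂μX ∂μT)
      = ∫ p, η (V p) * deriv φ p.1 ∂Pm := by
    have h1 : (∫ p, η (V p) * deriv φ p.1 ∂Pm)
        = ∫ t, ∫ x, η (V (t, x)) * deriv φ t ∂μX ∂μT :=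
      MeasureTheory.integral_prod _ hInt_e1
    rw [h1]
    apply integral_congr_ae
    filter_upwards [ae_restrict_mem measurableSet_Ioo] with t ht
    apply integral_congr_ae
    filter_upwards with x
    rw [hVv t x (Ioo_subset_Icc_self ht)]
  -- rewrite the second integral
  have hI2 : (∫ t, ∫ x, fderiv ℝ η (v t x) (R t x) * φ t ∂μX ∂μT)
      = (∫ p, A p * φ p.1 ∂Pm) + ∫ p, B p * φ p.1 ∂Pm := by
    have h0 := Measure.ae_ae_of_ae_prod hE
    have h1 : (∫ t, ∫ x, fderiv ℝ η (v t x) (R t x) * φ t ∂μX ∂μT)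
        = ∫ t, ∫ x, (A (t, x) + B (t, x)) * φ t ∂μX ∂μT := by
      apply integral_congr_ae
      filter_upwards [h0] with t ht
      exact integral_congr_ae ht
    have h2 : (∫ p, (A p + B p) * φ p.1 ∂Pm)
        = ∫ t, ∫ x, (A (t, x) + B (t, x)) * φ t ∂μX ∂μT :=
      MeasureTheory.integral_prod _ hInt_AB
    have h3 : (∫ p, (A p + B p) * φ p.1 ∂Pm)
        = ∫ p, (A p * φ p.1 + B p * φ p.1) ∂Pm :=
      integral_congr_ae (by filter_upwards with p; ring)
    rw [h1, ← h2, h3]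
    exact integral_add hInt_A hInt_B
  -- the B term vanishes by periodicity
  have hJB : (∫ p, B p * φ p.1 ∂Pm) = 0 := by
    have h1 : (∫ p, B p * φ p.1 ∂Pm) = ∫ t, ∫ x, B (t, x) * φ t ∂μX ∂μT :=
      MeasureTheory.integral_prod _ hInt_B
    rw [h1]
    have h0 : ∀ᵐ t ∂μT, (∫ x, B (t, x) * φ t ∂μX) = 0 := by
      filter_upwards [hF1, ae_restrict_mem measurableSet_Ioo] with t hdt ht
      have hsl0 : LipschitzWith 1 (fun y : ℝ => ((t, y) : ℝ × ℝ)) := by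
        have := (LipschitzWith.const (α := ℝ) (t : ℝ)).prodMk LipschitzWith.id
        simpa using this
      have hsl : LipschitzWith ((Kq * (Lv * 1)) * 1) (fun y : ℝ => q (V (t, y))) :=
        hqV.comp hsl0
      have hder : ∀ᵐ x ∂μX, HasDerivAt (fun y => q (V (t, y))) (B (t, x)) x := by
        filter_upwards [hdt] with x hdx
        have h2 := (hP t x ht hdx).2.1
        refine h2.congr_of_eventuallyEq ?_
        filter_upwards with y
        rw [hVv t y (Ioo_subset_Icc_self ht)]
      have hint := ftc_lip zero_le_one hsl hder
      have hval : q (V (t, 1)) - q (V (t, 0)) = 0 := by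
        have h3 : V (t, 0 + 1) = V (t, 0) := hVper t 0
        rw [zero_add] at h3
        rw [h3, sub_self]
      have h4 : (∫ x, B (t, x) ∂μX) = 0 := hint.trans hval
      rw [MeasureTheory.integral_mul_const, h4, zero_mul]
    rw [integral_congr_ae h0, integral_zero]
  -- the A and e1 terms combine via FTC in time
  have hI3 : (∫ p, A p * φ p.1 ∂Pm) + (∫ p, η (V p) * deriv φ p.1 ∂Pm)
      = - ∫ x, η (v 0 x) * φ 0 ∂μX := by
    have h1 : (∫ p, A p * φ p.1 ∂Pm) + (∫ p, η (V p) * deriv φ p.1 ∂Pm)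
        = ∫ p, (A p * φ p.1 + η (V p) * deriv φ p.1) ∂Pm :=
      (integral_add hInt_A hInt_e1).symm
    have h2 : (∫ p, (A p * φ p.1 + η (V p) * deriv φ p.1) ∂Pm)
        = ∫ t, ∫ x, (A (t, x) * φ t + η (V (t, x)) * deriv φ t) ∂μX ∂μT :=
      MeasureTheory.integral_prod _ hInt_Ae1
    have h3 : (∫ t, ∫ x, (A (t, x) * φ t + η (V (t, x)) * deriv φ t) ∂μX ∂μT)
        = ∫ x, ∫ t, (A (t, x) * φ t + η (V (t, x)) * deriv φ t) ∂μT ∂μX :=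
      MeasureTheory.integral_integral_swap hInt_Ae1
    have h4 : (∫ x, ∫ t, (A (t, x) * φ t + η (V (t, x)) * deriv φ t) ∂μT ∂μX)
        = ∫ x, (- (η (v 0 x) * φ 0)) ∂μX := by
      apply integral_congr_ae
      filter_upwards [hF2] with x hdx
      have hsl0 : LipschitzWith 1 (fun t : ℝ => ((t, x) : ℝ × ℝ)) := by
        have := LipschitzWith.id.prodMk (LipschitzWith.const (α := ℝ) (x : ℝ))
        simpa using this
      have hg1lip : LipschitzWith ((Kη * (Lv * 1)) * 1) (fun t : ℝ => η (V (t, x))) :=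
        hηV.comp hsl0
      have hg1bd : ∀ t, |η (V (t, x))| ≤ Cη := fun t => hηVb (t, x)
      have hφlipIcc : LipschitzOnWith (Real.toNNReal Cφ') φ (Icc 0 T) := by
        apply Convex.lipschitzOnWith_of_nnnorm_fderiv_le (fun s _ => hφd s) _ (convex_Icc _ _)
        intro s hs
        rw [← NNReal.coe_le_coe]
        simp only [coe_nnnorm, Real.coe_toNNReal']
        refine le_trans ?_ (le_max_left _ _)
        rw [← norm_deriv_eq_norm_fderiv]
        exact hCφ' s hs
      have hg2lip : LipschitzWith (Real.toNNReal Cφ' * 1) (fun t => φ (cl t)) :=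
        lipschitzOnWith_univ.1 (hφlipIcc.comp (lipschitzOnWith_univ.2 hclLip)
          fun s _ => hclmem s)
      have hg2bd : ∀ t, |φ (cl t)| ≤ Cφ := fun t => by
        simpa [Real.norm_eq_abs] using hCφ _ (hclmem t)
      obtain ⟨K2, hK2⟩ := lip_mul hg1lip hg2lip hg1bd hg2bd
      have hder : ∀ᵐ t ∂μT, HasDerivAt (fun s => η (V (s, x)) * φ (cl s))
          (A (t, x) * φ t + η (V (t, x)) * deriv φ t) t := by
        filter_upwards [hdx, ae_restrict_mem measurableSet_Ioo] with t hdt ht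
        have h1' : HasDerivAt (fun s => η (v s x)) (A (t, x)) t := (hP t x ht hdt).1
        have h2' : HasDerivAt φ (deriv φ t) t := (hφd t).hasDerivAt
        have h3' := h1'.mul h2'
        have hev : (fun s => η (V (s, x)) * φ (cl s)) =ᶠ[nhds t]
            fun s => η (v s x) * φ s := by
          filter_upwards [isOpen_Ioo.mem_nhds ht] with s hs
          rw [hVv s x (Ioo_subset_Icc_self hs), hclid s (Ioo_subset_Icc_self hs)]
        have h4' := h3'.congr_of_eventuallyEq hev
        rw [hVv t x (Ioo_subset_Icc_self ht)]
        exact h4'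
      have hint := ftc_lip (le_of_lt hT) hK2 hder
      have hclT : cl T = T := hclid T ⟨le_of_lt hT, le_refl T⟩
      have hcl0 : cl 0 = 0 := hclid 0 ⟨le_refl 0, le_of_lt hT⟩
      have hval : η (V (T, x)) * φ (cl T) - η (V (0, x)) * φ (cl 0)
          = - (η (v 0 x) * φ 0) := by
        rw [hclT, hcl0, hφT, hVv 0 x ⟨le_refl 0, le_of_lt hT⟩]
        ring
      exact hint.trans hval
    exact h1.trans (h2.trans (h3.trans (h4.trans (integral_neg _))))
  rw [hI1, hI2, hJB]
  linarith [hI3]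
end

section
/- Let u : (0,1) → ℝ be given by u(x) = x^{1/2}, and for ε ∈ (0,1/4) define u^ε : (0,1) → ℝ by u^ε(x) = x^{1 − ε/2} for x ∈ (0,ε) and u^ε(x) = x^{1/2} for x ∈ [ε,1). Then for every ε ∈ (0,1/4): (i) ‖u^ε − u‖_{L^∞((0,1))} ≤ ε^{1/2}; (ii) ∫_0^1 u^ε(x)^{-1} dx < ∞; and (iii) ∫_0^1 u^ε(x)^{-1} dx ≥ 1/ε. Consequently, ∫_0^1 u^ε(x)^{-1} dx → +∞ while ‖u^ε − u‖_{L^∞((0,1))} → 0 as ε → 0⁺; hence the map E(v) := ∫_0^1 1/v(x) dx, restricted to the set { v ∈ L^∞((0,1)) : v > 0 a.e., ∫_0^1 1/v < ∞ }, is not continuous at u with respect to the L^∞ norm. -/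
open MeasureTheory
open scoped ENNReal

open Real

-- core facts about the piecewise function
section aux
variable {ε : ℝ} (hε0 : 0 < ε) (hε4 : ε < 1/4)

private noncomputable def fε (ε : ℝ) : ℝ → ℝ :=
  fun x => if x ∈ Set.Ioo (0:ℝ) ε then x ^ ((1:ℝ) - ε/2) else x ^ ((1:ℝ)/2)

private lemma fε_meas (ε : ℝ) : Measurable (fε ε) :=
  Measurable.ite measurableSet_Ioo (by fun_prop) (by fun_prop)

include hε0 hε4

private lemma fε_inv_le (x : ℝ) (hx : x ∈ Set.Ioo (0:ℝ) 1) :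
    1 / fε ε x ≤ x ^ (ε/2 - 1) := by
  obtain ⟨hx0, hx1⟩ := hx
  by_cases h : x ∈ Set.Ioo (0:ℝ) ε
  · rw [fε, if_pos h, one_div, ← Real.rpow_neg hx0.le]
    apply le_of_eq; ring_nf
  · rw [fε, if_neg h, one_div, ← Real.rpow_neg hx0.le]
    exact Real.rpow_le_rpow_of_exponent_ge hx0 hx1.le (by linarith)

private lemma fε_int : IntegrableOn (fun x => 1 / fε ε x) (Set.Ioo (0:ℝ) 1) := by
  have hbig : IntegrableOn (fun x : ℝ => x ^ (ε/2 - 1)) (Set.Ioo (0:ℝ) 1) :=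
    (intervalIntegral.integrableOn_Ioo_rpow_iff one_pos).2 (by linarith)
  refine Integrable.mono hbig ?_ ?_
  · exact ((fε_meas ε).const_div 1 |>.aestronglyMeasurable)
  · refine (ae_restrict_iff' measurableSet_Ioo).2 (Filter.Eventually.of_forall fun x hx => ?_)
    have h1 : 0 < fε ε x := by
      rw [fε]; split <;> exact Real.rpow_pos_of_pos hx.1 _
    rw [Real.norm_eq_abs, Real.norm_eq_abs, abs_of_nonneg (by positivity),
      abs_of_nonneg (Real.rpow_nonneg hx.1.le _)]
    exact fε_inv_le hε0 hε4 x hx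

private lemma fε_lintegral_lt_top :
    (∫⁻ x in Set.Ioo (0:ℝ) 1, ENNReal.ofReal (1 / fε ε x)) < ⊤ := by
  have h := (fε_int hε0 hε4).hasFiniteIntegral
  refine lt_of_le_of_lt ?_ h
  refine lintegral_mono fun x => ?_
  rw [← ofReal_norm]
  exact ENNReal.ofReal_le_ofReal (le_abs_self _)

private lemma half_le_rpow : (1:ℝ)/2 ≤ ε ^ (ε/2) := by
  have hlog : Real.log (1/ε) ≤ 1/ε - 1 := Real.log_le_sub_one_of_pos (by positivity)
  rw [Real.log_div one_ne_zero (ne_of_gt hε0), Real.log_one] at hlog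
  -- -log ε ≤ 1/ε - 1, so ε * (-log ε) ≤ 1 - ε ≤ 1
  have hεε : ε * (1/ε) = 1 := by field_simp
  have h1 : ε * (-Real.log ε) ≤ 1 - ε := by
    nlinarith [mul_le_mul_of_nonneg_left hlog hε0.le]
  have h2 : -(1:ℝ)/2 ≤ (ε/2) * Real.log ε := by nlinarith
  have hl2 : (1:ℝ)/2 ≤ Real.log 2 := le_of_lt (by linarith [Real.log_two_gt_d9])
  have key : Real.exp (Real.log (1/2)) ≤ Real.exp ((ε/2) * Real.log ε) := by
    apply Real.exp_le_exp.2
    rw [Real.log_div one_ne_zero two_ne_zero, Real.log_one]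
    linarith
  rw [Real.exp_log (by norm_num : (0:ℝ) < 1/2)] at key
  rw [Real.rpow_def_of_pos hε0, mul_comm (Real.log ε)]
  exact key

private lemma fε_integral_ge : 1/ε ≤ ∫ x in Set.Ioo (0:ℝ) 1, 1 / fε ε x := by
  have hsub : Set.Ioo (0:ℝ) ε ⊆ Set.Ioo (0:ℝ) 1 :=
    Set.Ioo_subset_Ioo le_rfl (by linarith)
  have step1 : (∫ x in Set.Ioo (0:ℝ) ε, 1 / fε ε x) ≤ ∫ x in Set.Ioo (0:ℝ) 1, 1 / fε ε x := by
    refine setIntegral_mono_set (fε_int hε0 hε4) ?_ (HasSubset.Subset.eventuallyLE hsub)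
    refine (ae_restrict_iff' measurableSet_Ioo).2 (Filter.Eventually.of_forall fun x hx => ?_)
    have h1 : 0 < fε ε x := by rw [fε]; split <;> exact Real.rpow_pos_of_pos hx.1 _
    positivity
  have step2 : (∫ x in Set.Ioo (0:ℝ) ε, 1 / fε ε x) = ∫ x in Set.Ioo (0:ℝ) ε, x ^ (ε/2 - 1) := by
    refine setIntegral_congr_fun measurableSet_Ioo fun x hx => ?_
    rw [fε, if_pos hx, one_div, ← Real.rpow_neg hx.1.le]
    ring_nf
  have step3 : (∫ x in Set.Ioo (0:ℝ) ε, x ^ (ε/2 - 1)) = ε ^ (ε/2) / (ε/2) := by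
    rw [← integral_Ioc_eq_integral_Ioo, ← intervalIntegral.integral_of_le hε0.le,
      integral_rpow (Or.inl (by linarith))]
    rw [Real.zero_rpow (by linarith : ε/2 - 1 + 1 ≠ 0)]
    ring_nf
  have step4 : 1/ε ≤ ε ^ (ε/2) / (ε/2) := by
    have h := half_le_rpow hε0 hε4
    rw [div_le_div_iff₀ (by positivity) (by positivity)]
    nlinarith
  linarith [step1, step2.symm.le, step3.le]

omit hε0 hε4 in
private lemma fε_pos (x : ℝ) (hx : 0 < x) : 0 < fε ε x := by
  rw [fε]; split <;> exact Real.rpow_pos_of_pos hx _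

private lemma fε_diff_bound :
    eLpNorm (fun x => fε ε x - x ^ ((1:ℝ)/2)) ⊤ (volume.restrict (Set.Ioo (0:ℝ) 1))
      ≤ ENNReal.ofReal (ε ^ ((1:ℝ)/2)) := by
  rw [eLpNorm_exponent_top]
  apply eLpNormEssSup_le_of_ae_bound (C := ε ^ ((1:ℝ)/2))
  refine (ae_restrict_iff' measurableSet_Ioo).2 (Filter.Eventually.of_forall fun x hx => ?_)
  by_cases h : x ∈ Set.Ioo (0:ℝ) ε
  · have ha : x ^ ((1:ℝ) - ε/2) ≤ x ^ ((1:ℝ)/2) :=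
      Real.rpow_le_rpow_of_exponent_ge hx.1 hx.2.le (by linarith)
    have hb : x ^ ((1:ℝ)/2) ≤ ε ^ ((1:ℝ)/2) :=
      Real.rpow_le_rpow hx.1.le h.2.le (by norm_num)
    have hc : 0 ≤ x ^ ((1:ℝ) - ε/2) := Real.rpow_nonneg hx.1.le _
    rw [fε, if_pos h, Real.norm_eq_abs, abs_of_nonpos (by linarith)]
    linarith
  · rw [fε, if_neg h, sub_self, norm_zero]
    exact Real.rpow_nonneg hε0.le _

private lemma fε_eLpNorm_lt_top :
    eLpNorm (fε ε) ⊤ (volume.restrict (Set.Ioo (0:ℝ) 1)) < ⊤ := by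
  rw [eLpNorm_exponent_top]
  refine lt_of_le_of_lt (eLpNormEssSup_le_of_ae_bound (C := 1) ?_) ENNReal.ofReal_lt_top
  refine (ae_restrict_iff' measurableSet_Ioo).2 (Filter.Eventually.of_forall fun x hx => ?_)
  rw [Real.norm_eq_abs, abs_of_nonneg (fε_pos x hx.1).le, fε]
  split <;> exact Real.rpow_le_one hx.1.le hx.2.le (by linarith)

end aux


set_option maxHeartbeats 1000000 in
/-- With `u(x) = x^{1/2}` and, for `ε ∈ (0,1/4)`,
`u^ε(x) = x^{1−ε/2}` on `(0,ε)` and `u^ε(x) = x^{1/2}` on `[ε,1)`, one has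
(i) `‖u^ε − u‖_{L^∞((0,1))} ≤ ε^{1/2}`, (ii) `∫_0^1 (u^ε)⁻¹ < ∞`,
(iii) `∫_0^1 (u^ε)⁻¹ ≥ 1/ε`; consequently `∫_0^1 (u^ε)⁻¹ → +∞` while
`‖u^ε − u‖_{L^∞} → 0` as `ε → 0⁺`, and hence `E(v) = ∫_0^1 1/v`, restricted to the
a.e.-positive essentially bounded functions with `∫ 1/v < ∞`, is not continuous at `u`
with respect to the `L^∞` norm. -/
theorem stmt15
    (u : ℝ → ℝ) (hu : u = fun x => x ^ ((1:ℝ)/2))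
    (uε : ℝ → ℝ → ℝ)
    (huε : ∀ ε ∈ Set.Ioo (0:ℝ) (1/4), ∀ x : ℝ,
      uε ε x = if x ∈ Set.Ioo (0:ℝ) ε then x ^ ((1:ℝ) - ε/2) else x ^ ((1:ℝ)/2)) :
    (∀ ε ∈ Set.Ioo (0:ℝ) (1/4),
      eLpNorm (fun x => uε ε x - u x) ⊤ (volume.restrict (Set.Ioo (0:ℝ) 1))
          ≤ ENNReal.ofReal (ε ^ ((1:ℝ)/2)) ∧
      (∫⁻ x in Set.Ioo (0:ℝ) 1, ENNReal.ofReal (1 / uε ε x)) < ⊤ ∧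
      (1 / ε) ≤ ∫ x in Set.Ioo (0:ℝ) 1, 1 / uε ε x) ∧
    Filter.Tendsto (fun ε => ∫ x in Set.Ioo (0:ℝ) 1, 1 / uε ε x)
      (nhdsWithin 0 (Set.Ioo (0:ℝ) (1/4))) Filter.atTop ∧
    Filter.Tendsto
      (fun ε => eLpNorm (fun x => uε ε x - u x) ⊤ (volume.restrict (Set.Ioo (0:ℝ) 1)))
      (nhdsWithin 0 (Set.Ioo (0:ℝ) (1/4))) (nhds 0) ∧
    ¬ (∀ δ : ℝ, 0 < δ → ∃ ρ : ℝ, 0 < ρ ∧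
        ∀ v : ℝ → ℝ, Measurable v →
          (∀ᵐ x ∂volume.restrict (Set.Ioo (0:ℝ) 1), 0 < v x) →
          eLpNorm v ⊤ (volume.restrict (Set.Ioo (0:ℝ) 1)) < ⊤ →
          (∫⁻ x in Set.Ioo (0:ℝ) 1, ENNReal.ofReal (1 / v x)) < ⊤ →
          eLpNorm (fun x => v x - u x) ⊤ (volume.restrict (Set.Ioo (0:ℝ) 1))
              < ENNReal.ofReal ρ →
          |(∫ x in Set.Ioo (0:ℝ) 1, 1 / v x) - ∫ x in Set.Ioo (0:ℝ) 1, 1 / u x| < δ) := by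
  have main : ∀ ε ∈ Set.Ioo (0:ℝ) (1/4),
      eLpNorm (fun x => uε ε x - u x) ⊤ (volume.restrict (Set.Ioo (0:ℝ) 1))
          ≤ ENNReal.ofReal (ε ^ ((1:ℝ)/2)) ∧
      (∫⁻ x in Set.Ioo (0:ℝ) 1, ENNReal.ofReal (1 / uε ε x)) < ⊤ ∧
      (1 / ε) ≤ ∫ x in Set.Ioo (0:ℝ) 1, 1 / uε ε x := by
    intro ε hε
    have hf : uε ε = fε ε := funext (huε ε hε)
    rw [hf, hu]
    exact ⟨fε_diff_bound hε.1 hε.2, fε_lintegral_lt_top hε.1 hε.2, fε_integral_ge hε.1 hε.2⟩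
  refine ⟨main, ?_, ?_, ?_⟩
  · -- divergence of the integrals
    have h1 : Filter.Tendsto (fun ε : ℝ => 1/ε) (nhdsWithin 0 (Set.Ioo (0:ℝ) (1/4)))
        Filter.atTop := by
      have h2 : Filter.Tendsto (fun ε : ℝ => ε⁻¹)
          (nhdsWithin 0 (Set.Ioo (0:ℝ) (1/4))) Filter.atTop :=
        (tendsto_inv_nhdsGT_zero (𝕜 := ℝ)).mono_left
          (nhdsWithin_mono 0 Set.Ioo_subset_Ioi_self)
      simpa [one_div] using h2
    exact Filter.tendsto_atTop_mono' _
      (eventually_mem_nhdsWithin.mono fun ε hε => (main ε hε).2.2) h1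
  · -- L∞ convergence to 0
    have hupper : Filter.Tendsto (fun ε : ℝ => ENNReal.ofReal (ε ^ ((1:ℝ)/2)))
        (nhdsWithin 0 (Set.Ioo (0:ℝ) (1/4))) (nhds 0) := by
      have hsq : Filter.Tendsto (fun ε : ℝ => Real.sqrt ε)
          (nhdsWithin 0 (Set.Ioo (0:ℝ) (1/4))) (nhds 0) := by
        have := (Real.continuous_sqrt.tendsto 0).mono_left
          (nhdsWithin_le_nhds (s := Set.Ioo (0:ℝ) (1/4)))
        simpa using this
      have h0 : Filter.Tendsto (fun ε : ℝ => ε ^ ((1:ℝ)/2))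
          (nhdsWithin 0 (Set.Ioo (0:ℝ) (1/4))) (nhds 0) := by
        refine hsq.congr' (eventually_mem_nhdsWithin.mono fun ε hε => ?_)
        exact Real.sqrt_eq_rpow ε
      have := (ENNReal.continuous_ofReal.tendsto 0).comp h0
      simpa [Function.comp_def] using this
    refine tendsto_of_tendsto_of_tendsto_of_le_of_le' tendsto_const_nhds hupper
      (Filter.Eventually.of_forall fun _ => zero_le) ?_
    exact eventually_mem_nhdsWithin.mono fun ε hε => (main ε hε).1
  · -- not continuous
    intro h
    set C := ∫ x in Set.Ioo (0:ℝ) 1, 1 / u x with hC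
    obtain ⟨ρ, hρ, hcont⟩ := h 1 one_pos
    set ε := min (1/8) (min (ρ^2/2) (1/(|C|+2))) with hεdef
    have hε0 : 0 < ε := by
      apply lt_min (by norm_num) (lt_min (by positivity) (by positivity))
    have hε4 : ε < 1/4 := lt_of_le_of_lt (min_le_left _ _) (by norm_num)
    have hεmem : ε ∈ Set.Ioo (0:ℝ) (1/4) := ⟨hε0, hε4⟩
    have hf : uε ε = fε ε := funext fun x => (huε ε hεmem x).trans (by rw [fε])
    have hmeas : Measurable (uε ε) := hf ▸ fε_meas ε
    have hpos : ∀ᵐ x ∂volume.restrict (Set.Ioo (0:ℝ) 1), 0 < uε ε x := by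
      refine (ae_restrict_iff' measurableSet_Ioo).2
        (Filter.Eventually.of_forall fun x hx => ?_)
      rw [hf]; exact fε_pos x hx.1
    have hbdd : eLpNorm (uε ε) ⊤ (volume.restrict (Set.Ioo (0:ℝ) 1)) < ⊤ := by
      rw [hf]; exact fε_eLpNorm_lt_top hε0 hε4
    have hlint : (∫⁻ x in Set.Ioo (0:ℝ) 1, ENNReal.ofReal (1 / uε ε x)) < ⊤ := by
      rw [show (fun x => ENNReal.ofReal (1 / uε ε x))
          = fun x => ENNReal.ofReal (1 / fε ε x) by rw [hf]]
      exact fε_lintegral_lt_top hε0 hε4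
    have hclose : eLpNorm (fun x => uε ε x - u x) ⊤ (volume.restrict (Set.Ioo (0:ℝ) 1))
        < ENNReal.ofReal ρ := by
      refine lt_of_le_of_lt (main ε hεmem).1 ?_
      rw [ENNReal.ofReal_lt_ofReal_iff hρ, ← Real.sqrt_eq_rpow]
      refine (Real.sqrt_lt' hρ).2 ?_
      have h1 : ε ≤ ρ^2/2 := le_trans (min_le_right _ _) (min_le_left _ _)
      nlinarith
    have hsmall := hcont (uε ε) hmeas hpos hbdd hlint hclose
    have hge : 1/ε ≤ ∫ x in Set.Ioo (0:ℝ) 1, 1 / uε ε x := (main ε hεmem).2.2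
    have h2 : |C| + 2 ≤ 1/ε := by
      have h3 : ε ≤ 1/(|C|+2) := le_trans (min_le_right _ _) (min_le_right _ _)
      rw [le_div_iff₀ hε0]
      calc (|C| + 2) * ε ≤ (|C| + 2) * (1/(|C|+2)) := by
            apply mul_le_mul_of_nonneg_left h3 (by positivity)
        _ = 1 := by field_simp
    rw [abs_lt] at hsmall
    have := le_abs_self C
    have := neg_abs_le C
    linarith [hsmall.2]
end
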